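/- Let λ = (λ_1,...,λ_m) be a partition with λ_i ≥ i and m > 1, and let X_λ be the polyhedral cell complex with vertices the pairs (i,j), i ≤ j ≤ λ_i, edges between horizontally and vertically adjacent pairs, and square 2-faces where all four corners are present. Then the number of vertices is Σ_{i=1}^m λ_i − C(m,2), the number of edges is λ_1 + 2(λ_2+...+λ_m) − m^2, and the number of 2-faces is λ_2+...+λ_m − C(m+1,2) + 1. -/
import Mathlib

lemma card_prod_filter_row {m n : ℕ} (f : ℕ → ℕ)
    (P : ℕ → ℕ → Prop) [DecidablePred fun p : ℕ × ℕ => P p.1 p.2]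
    [∀ i, DecidablePred (P i)]
    (h : ∀ i, i < m → ((Finset.range n).filter (P i)).card = f i) :
    (((Finset.range m) ×ˢ (Finset.range n)).filter (fun p => P p.1 p.2)).card
      = ∑ i ∈ Finset.range m, f i := by
  rw [Finset.card_filter, Finset.sum_product]
  refine Finset.sum_congr rfl fun i hi => ?_
  rw [← h i (Finset.mem_range.mp hi), Finset.card_filter]



/-- (0-based indexing) let `λ` be a partition with `m > 1` rows, `λ i > i`,
`λ i ≤ n`, and let `X_λ` be the polyhedral cell complex whose vertices are the pairs
`(i,j)` with `i ≤ j < λ i` (`i < m`), whose edges join horizontally adjacent pairs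
`(i,j)-(i,j+1)` and vertically adjacent pairs `(i,j)-(i+1,j)`, and whose square 2-faces
have all four corners `(i,j),(i,j+1),(i+1,j),(i+1,j+1)` present.  Then (written without
truncated subtraction): `#vertices = ∑ λ i − C(m,2)`,
`#edges = λ 0 + 2·∑_{i≥1} λ i − m²`, and `#faces = ∑_{i≥1} λ i − C(m+1,2) + 1`. -/
theorem cell_complex_counts {m n : ℕ}
    (hm : 1 < m)
    (lam : ℕ → ℕ)
    (hanti : ∀ i j : ℕ, i ≤ j → j < m → lam j ≤ lam i)
    (hbound : ∀ i : ℕ, i < m → lam i ≤ n)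
    (hlow : ∀ i : ℕ, i < m → i < lam i)
    (Vert Hedge Vedge Face : Finset (ℕ × ℕ))
    (hVert : Vert = ((Finset.range m) ×ˢ (Finset.range n)).filter
      (fun p => p.1 ≤ p.2 ∧ p.2 < lam p.1))
    (hHedge : Hedge = ((Finset.range m) ×ˢ (Finset.range n)).filter
      (fun p => p.1 ≤ p.2 ∧ p.2 + 1 < lam p.1))
    (hVedge : Vedge = ((Finset.range m) ×ˢ (Finset.range n)).filter
      (fun p => p.1 + 1 < m ∧ p.1 + 1 ≤ p.2 ∧ p.2 < lam (p.1 + 1)))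
    (hFace : Face = ((Finset.range m) ×ˢ (Finset.range n)).filter
      (fun p => p.1 + 1 < m ∧ p.1 + 1 ≤ p.2 ∧ p.2 + 1 < lam (p.1 + 1))) :
    Vert.card + Nat.choose m 2 = ∑ i ∈ Finset.range m, lam i ∧
    Hedge.card + Vedge.card + m ^ 2
      = lam 0 + 2 * ∑ i ∈ Finset.Ico 1 m, lam i ∧
    Face.card + Nat.choose (m + 1) 2 = (∑ i ∈ Finset.Ico 1 m, lam i) + 1 := by
  have gauss : ∑ i ∈ Finset.range m, i = Nat.choose m 2 := by
    rw [Finset.sum_range_id, Nat.choose_two_right]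
  have gauss' : ∑ i ∈ Finset.Ico 1 m, i = Nat.choose m 2 := by
    rw [← gauss, Finset.range_eq_Ico,
      ← Finset.sum_Ico_consecutive (fun i => i) (Nat.zero_le 1) (le_of_lt hm)]
    simp
  have hq2 : m ^ 2 = 2 * Nat.choose m 2 + m := by
    obtain ⟨m', rfl⟩ : ∃ m', m = m' + 1 := ⟨m - 1, by omega⟩
    have h2 : (∑ i ∈ Finset.range (m' + 1), i) * 2 = (m' + 1) * m' :=
      Finset.sum_range_id_mul_two (m' + 1)
    rw [gauss] at h2
    have : (m' + 1) ^ 2 = (m' + 1) * m' + (m' + 1) := by ring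
    omega
  have hCs : Nat.choose (m + 1) 2 = Nat.choose m 2 + m := by
    have h := Nat.choose_succ_succ m 1
    simp only [Nat.choose_one_right] at h
    simpa [Nat.add_comm] using h
  -- cardinalities
  have hV : Vert.card = ∑ i ∈ Finset.range m, (lam i - i) := by
    rw [hVert]
    refine card_prod_filter_row (fun i => lam i - i)
      (fun i j => i ≤ j ∧ j < lam i) (fun i hi => ?_)
    show _ = lam i - i
    have : ((Finset.range n).filter (fun j => i ≤ j ∧ j < lam i))
        = Finset.Ico i (lam i) := by
      ext j; simp [Finset.mem_Ico]
      have := hbound i hi; omega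
    rw [this, Nat.card_Ico]
  have hH : Hedge.card = ∑ i ∈ Finset.range m, (lam i - i - 1) := by
    rw [hHedge]
    refine card_prod_filter_row (fun i => lam i - i - 1)
      (fun i j => i ≤ j ∧ j + 1 < lam i) (fun i hi => ?_)
    show _ = lam i - i - 1
    have : ((Finset.range n).filter (fun j => i ≤ j ∧ j + 1 < lam i))
        = Finset.Ico i (lam i - 1) := by
      ext j; simp [Finset.mem_Ico]
      have := hbound i hi; omega
    rw [this, Nat.card_Ico]; omega
  have hVe : Vedge.card = ∑ k ∈ Finset.Ico 1 m, (lam k - k) := by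
    rw [hVedge]
    have step := card_prod_filter_row
      (fun i => if i + 1 < m then lam (i + 1) - (i + 1) else 0)
      (fun i j => i + 1 < m ∧ i + 1 ≤ j ∧ j < lam (i + 1)) (m := m) (n := n)
      (fun i hi => by
        by_cases h : i + 1 < m
        · have : ((Finset.range n).filter
              (fun j => i + 1 < m ∧ i + 1 ≤ j ∧ j < lam (i + 1)))
              = Finset.Ico (i + 1) (lam (i + 1)) := by
            ext j; simp [Finset.mem_Ico, h]
            have := hbound (i + 1) h; omega
          rw [this, Nat.card_Ico]; simp [h]
        · simp only [h]
          rw [Finset.filter_eq_empty_iff.mpr (by intro j _; simp [h])]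
          simp [h])
    rw [step, Finset.sum_Ico_eq_sum_range]
    obtain ⟨m', rfl⟩ : ∃ m', m = m' + 1 := ⟨m - 1, by omega⟩
    rw [Finset.sum_range_succ]
    simp only [Nat.add_sub_cancel, Nat.lt_irrefl, if_false, add_zero]
    refine Finset.sum_congr rfl fun i hi => ?_
    have hi' : i + 1 < m' + 1 := by have := Finset.mem_range.mp hi; omega
    simp [hi', Nat.add_comm 1 i]
  have hF : Face.card = ∑ k ∈ Finset.Ico 1 m, (lam k - k - 1) := by
    rw [hFace]
    have step := card_prod_filter_row
      (fun i => if i + 1 < m then lam (i + 1) - (i + 1) - 1 else 0)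
      (fun i j => i + 1 < m ∧ i + 1 ≤ j ∧ j + 1 < lam (i + 1)) (m := m) (n := n)
      (fun i hi => by
        by_cases h : i + 1 < m
        · have : ((Finset.range n).filter
              (fun j => i + 1 < m ∧ i + 1 ≤ j ∧ j + 1 < lam (i + 1)))
              = Finset.Ico (i + 1) (lam (i + 1) - 1) := by
            ext j; simp [Finset.mem_Ico, h]
            have := hbound (i + 1) h; omega
          rw [this, Nat.card_Ico]; simp [h]; omega
        · simp only [h]
          rw [Finset.filter_eq_empty_iff.mpr (by intro j _; simp [h])]
          simp [h])
    rw [step, Finset.sum_Ico_eq_sum_range]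
    obtain ⟨m', rfl⟩ : ∃ m', m = m' + 1 := ⟨m - 1, by omega⟩
    rw [Finset.sum_range_succ]
    simp only [Nat.add_sub_cancel, Nat.lt_irrefl, if_false, add_zero]
    refine Finset.sum_congr rfl fun i hi => ?_
    have hi' : i + 1 < m' + 1 := by have := Finset.mem_range.mp hi; omega
    simp [hi', Nat.add_comm 1 i]
  -- linear relations
  have e1 : Vert.card + Nat.choose m 2 = ∑ i ∈ Finset.range m, lam i := by
    rw [hV, ← gauss, ← Finset.sum_add_distrib]
    exact Finset.sum_congr rfl fun i hi => by
      have := hlow i (Finset.mem_range.mp hi); omega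
  have e2 : Hedge.card + Nat.choose m 2 + m = ∑ i ∈ Finset.range m, lam i := by
    have h1 : ∑ i ∈ Finset.range m, (i + 1)
        = Nat.choose m 2 + m := by
      rw [Finset.sum_add_distrib, gauss]; simp
    rw [hH, add_assoc, ← h1, ← Finset.sum_add_distrib]
    exact Finset.sum_congr rfl fun i hi => by
      have := hlow i (Finset.mem_range.mp hi); omega
  have e3 : Vedge.card + Nat.choose m 2 = ∑ i ∈ Finset.Ico 1 m, lam i := by
    rw [hVe, ← gauss', ← Finset.sum_add_distrib]
    exact Finset.sum_congr rfl fun k hk => by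
      have hk' := (Finset.mem_Ico.mp hk)
      have := hlow k hk'.2; omega
  have e4 : Face.card + Nat.choose m 2 + (m - 1) = ∑ i ∈ Finset.Ico 1 m, lam i := by
    have h1 : ∑ k ∈ Finset.Ico 1 m, (k + 1) = Nat.choose m 2 + (m - 1) := by
      rw [Finset.sum_add_distrib, gauss']; simp [Nat.card_Ico]
    rw [hF, add_assoc, ← h1, ← Finset.sum_add_distrib]
    exact Finset.sum_congr rfl fun k hk => by
      have hk' := (Finset.mem_Ico.mp hk)
      have := hlow k hk'.2; omega
  have e5 : ∑ i ∈ Finset.range m, lam i = lam 0 + ∑ i ∈ Finset.Ico 1 m, lam i := by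
    rw [Finset.range_eq_Ico,
      ← Finset.sum_Ico_consecutive lam (Nat.zero_le 1) (le_of_lt hm)]
    simp
  refine ⟨e1, ?_, ?_⟩
  · rw [hq2]; omega
  · rw [hCs]; omega
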